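/- arXiv:1903.06209 — 4 statements merged into one kernel-verified Lean document; each statement's English description precedes it below -/
import Mathlib

section
/- Let n be a natural number, C a one-hole context over n variables, ψ a Boolean formula over n variables (the true subformula at the hole), and let R = {x ∈ {0,1}^n : x is relevant for C}. Let μ be a probability measure on the finite type {0,1}^n with μ(R) > 0. Then for every hypothesis h : {0,1}^n → {0,1}, the root-level error satisfies μ({x : eval(C, h, x) ≠ eval(C[ψ], x)}) ≤ μ({x ∈ R : h(x) ≠ eval(ψ, x)}) / μ(R). In words: the test error at the root under the full distribution is at most the error of h under the conditional distribution obtained by filtering to relevant examples, so training on only relevant data does not degrade test performance (Theorem 1 of the paper). -/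
open MeasureTheory


/-- Boolean formulas over `n` variables. -/
inductive BFormula (n : ℕ) : Type where
  | var : Fin n → BFormula n
  | not : BFormula n → BFormula n
  | and : BFormula n → BFormula n → BFormula n
  | or  : BFormula n → BFormula n → BFormula n

/-- Evaluation of a Boolean formula on an assignment. -/
def BFormula.eval {n : ℕ} : BFormula n → (Fin n → Bool) → Bool
  | .var i, x => x i
  | .not φ, x => !(φ.eval x)
  | .and φ ψ, x => φ.eval x && ψ.eval x
  | .or φ ψ, x => φ.eval x || ψ.eval x

/-- One-hole contexts over `n` variables: a Boolean formula with exactly one hole. -/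
inductive Ctx (n : ℕ) : Type where
  | hole : Ctx n
  | not : Ctx n → Ctx n
  | andL : Ctx n → BFormula n → Ctx n
  | andR : BFormula n → Ctx n → Ctx n
  | orL : Ctx n → BFormula n → Ctx n
  | orR : BFormula n → Ctx n → Ctx n

/-- `C.fill ψ` replaces the hole of `C` by the formula `ψ`. -/
def Ctx.fill {n : ℕ} : Ctx n → BFormula n → BFormula n
  | .hole, ψ => ψ
  | .not C, ψ => .not (C.fill ψ)
  | .andL C φ, ψ => .and (C.fill ψ) φ
  | .andR φ C, ψ => .and φ (C.fill ψ)
  | .orL C φ, ψ => .or (C.fill ψ) φ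
  | .orR φ C, ψ => .or φ (C.fill ψ)

/-- `C.evalWith h x` evaluates `C` at `x`, the hole taking the value `h x`. -/
def Ctx.evalWith {n : ℕ} : Ctx n → ((Fin n → Bool) → Bool) → (Fin n → Bool) → Bool
  | .hole, h, x => h x
  | .not C, h, x => !(C.evalWith h x)
  | .andL C φ, h, x => C.evalWith h x && φ.eval x
  | .andR φ C, h, x => φ.eval x && C.evalWith h x
  | .orL C φ, h, x => C.evalWith h x || φ.eval x
  | .orR φ C, h, x => φ.eval x || C.evalWith h x

/-- An assignment `x` is relevant for `C` if flipping the value at the hole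
flips the value at the root. -/
def Ctx.Relevant {n : ℕ} (C : Ctx n) (x : Fin n → Bool) : Prop :=
  C.evalWith (fun _ => false) x ≠ C.evalWith (fun _ => true) x

lemma Ctx.evalWith_const {n : ℕ} (C : Ctx n) (h : (Fin n → Bool) → Bool)
    (x : Fin n → Bool) : C.evalWith h x = C.evalWith (fun _ => h x) x := by
  induction C with
  | hole => rfl
  | not C ih => simp [Ctx.evalWith, ih]
  | andL C φ ih => simp [Ctx.evalWith, ih]
  | andR φ C ih => simp [Ctx.evalWith, ih]
  | orL C φ ih => simp [Ctx.evalWith, ih]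
  | orR φ C ih => simp [Ctx.evalWith, ih]

lemma Ctx.eval_fill {n : ℕ} (C : Ctx n) (ψ : BFormula n) (x : Fin n → Bool) :
    (C.fill ψ).eval x = C.evalWith (fun y => ψ.eval y) x := by
  induction C with
  | hole => rfl
  | not C ih => simp [Ctx.fill, Ctx.evalWith, BFormula.eval, ih]
  | andL C φ ih => simp [Ctx.fill, Ctx.evalWith, BFormula.eval, ih]
  | andR φ C ih => simp [Ctx.fill, Ctx.evalWith, BFormula.eval, ih]
  | orL C φ ih => simp [Ctx.fill, Ctx.evalWith, BFormula.eval, ih]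
  | orR φ C ih => simp [Ctx.fill, Ctx.evalWith, BFormula.eval, ih]

/-- **Theorem 1 (Training on only relevant data does not degrade test performance).**
For any one-hole context `C`, true subformula `ψ`, probability measure `μ` on assignments
giving positive weight to the relevant set `R`, and any hypothesis `h`, the root-level
error under `μ` is at most the error of `h` under the conditional distribution on `R`. -/
theorem impact_relevant_filtering_preserves_performance
    (n : ℕ) (C : Ctx n) (ψ : BFormula n)
    (μ : Measure (Fin n → Bool)) [IsProbabilityMeasure μ]
    (hR : 0 < μ {x | C.Relevant x})
    (h : (Fin n → Bool) → Bool) :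
    μ {x | C.evalWith h x ≠ (C.fill ψ).eval x} ≤
      μ {x | C.Relevant x ∧ h x ≠ ψ.eval x} / μ {x | C.Relevant x} := by
  have hsub : {x | C.evalWith h x ≠ (C.fill ψ).eval x} ⊆
      {x | C.Relevant x ∧ h x ≠ ψ.eval x} := by
    intro x hx
    simp only [Set.mem_setOf_eq, Ctx.eval_fill] at hx
    rw [C.evalWith_const h x, C.evalWith_const (fun y => ψ.eval y) x] at hx
    constructor
    · intro hrel
      apply hx
      cases hb : h x <;> cases hb' : ψ.eval x <;> simp_all [Ctx.Relevant]
    · intro he; rw [he] at hx; exact hx rfl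
  calc μ {x | C.evalWith h x ≠ (C.fill ψ).eval x}
      ≤ μ {x | C.Relevant x ∧ h x ≠ ψ.eval x} := measure_mono hsub
    _ ≤ μ {x | C.Relevant x ∧ h x ≠ ψ.eval x} / μ {x | C.Relevant x} := by
        rw [ENNReal.le_div_iff_mul_le (Or.inl hR.ne') (Or.inl (measure_ne_top μ _))]
        exact mul_le_of_le_one_right zero_le prob_le_one
end

section
/- Let C be a one-hole context over n variables such that no negation node occurs on the hole path of C (all nodes on the path from the root to the hole are conjunctions or disjunctions), and let ψ be any Boolean formula over n variables. Then for every assignment x ∈ {0,1}^n that is relevant for C, the value at the root equals the value at the hole: eval(C[ψ], x) = eval(ψ, x). That is, in a computation DAG with all negations pushed to the leaves, every relevant example at a node is correlated (Lemma 1 of the paper). -/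
/-- No negation node occurs on the path from the root of the context to the hole. -/
def Ctx.NoNegOnHolePath {n : ℕ} : Ctx n → Prop
  | .hole => True
  | .not _ => False
  | .andL C _ => C.NoNegOnHolePath
  | .andR _ C => C.NoNegOnHolePath
  | .orL C _ => C.NoNegOnHolePath
  | .orR _ C => C.NoNegOnHolePath

/-- **Lemma 1.** If all nodes on the hole path of `C` are conjunctions or disjunctions,
then for every relevant assignment `x` the value at the root equals the value at the hole:
every relevant example at the node is correlated. -/
theorem impact_relevant_examples_correlated
    (n : ℕ) (C : Ctx n) (hC : C.NoNegOnHolePath) (ψ : BFormula n)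
    (x : Fin n → Bool) (hx : C.Relevant x) :
    (C.fill ψ).eval x = ψ.eval x := by
  induction C with
  | hole => rfl
  | not C ih => exact absurd hC id
  | andL C φ ih =>
    simp only [Ctx.Relevant, Ctx.evalWith, ne_eq] at hx
    simp only [Ctx.fill, BFormula.eval]
    cases hφ : φ.eval x with
    | false => simp [hφ] at hx
    | true =>
      simp only [hφ, Bool.and_true]
      exact ih hC (by simpa [hφ, Ctx.Relevant] using hx)
  | andR φ C ih =>
    simp only [Ctx.Relevant, Ctx.evalWith, ne_eq] at hx
    simp only [Ctx.fill, BFormula.eval]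
    cases hφ : φ.eval x with
    | false => simp [hφ] at hx
    | true =>
      simp only [hφ, Bool.true_and]
      exact ih hC (by simpa [hφ, Ctx.Relevant] using hx)
  | orL C φ ih =>
    simp only [Ctx.Relevant, Ctx.evalWith, ne_eq] at hx
    simp only [Ctx.fill, BFormula.eval]
    cases hφ : φ.eval x with
    | true => simp [hφ] at hx
    | false =>
      simp only [hφ, Bool.or_false]
      exact ih hC (by simpa [hφ, Ctx.Relevant] using hx)
  | orR φ C ih =>
    simp only [Ctx.Relevant, Ctx.evalWith, ne_eq] at hx
    simp only [Ctx.fill, BFormula.eval]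
    cases hφ : φ.eval x with
    | true => simp [hφ] at hx
    | false =>
      simp only [hφ, Bool.false_or]
      exact ih hC (by simpa [hφ, Ctx.Relevant] using hx)
end

section
/- Error accumulation over a gate tree: let a gate tree over n variables be defined inductively as either a leaf carrying a variable index i < n, or an internal node carrying two functions g_v, h_v : {0,1} × {0,1} → {0,1} (the true gate and the hypothesis gate) together with left and right gate subtrees. For an assignment x ∈ {0,1}^n, define the true evaluation val(T, x) by applying the true gates g_v recursively, and the learned evaluation lval(T, x) by applying the hypothesis gates h_v recursively to the learned values of the children. Then for every probability measure μ on {0,1}^n and every gate tree T: μ({x : lval(T, x) ≠ val(T, x)}) ≤ Σ over internal nodes v of T of μ({x : h_v(val(L_v, x), val(R_v, x)) ≠ g_v(val(L_v, x), val(R_v, x))}), where L_v, R_v are the child subtrees of v. That is, the error of the learned formula at the root is at most the sum over all nodes of the per-node error of the hypothesis gate on uncorrupted inputs. -/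
open MeasureTheory

/-- A gate tree over `n` variables: a leaf reads an input variable; an internal node
carries a true gate `g` and a hypothesis gate `h` together with two child subtrees. -/
inductive GateTree (n : ℕ) : Type where
  | leaf : Fin n → GateTree n
  | node : (Bool → Bool → Bool) → (Bool → Bool → Bool) →
      GateTree n → GateTree n → GateTree n

/-- True evaluation: apply the true gates recursively. -/
def GateTree.val {n : ℕ} : GateTree n → (Fin n → Bool) → Bool
  | .leaf i, x => x i
  | .node g _ L R, x => g (L.val x) (R.val x)

/-- Learned evaluation: apply the hypothesis gates recursively to the learned
values of the children. -/
def GateTree.lval {n : ℕ} : GateTree n → (Fin n → Bool) → Bool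
  | .leaf i, x => x i
  | .node _ h L R, x => h (L.lval x) (R.lval x)

/-- The sum, over the internal nodes `v` of the tree, of the probability that the
hypothesis gate at `v` disagrees with the true gate at `v` on the (uncorrupted)
true values of the children. -/
noncomputable def GateTree.nodeErrSum {n : ℕ} (μ : Measure (Fin n → Bool)) :
    GateTree n → ENNReal
  | .leaf _ => 0
  | .node g h L R =>
      μ {x | h (L.val x) (R.val x) ≠ g (L.val x) (R.val x)} +
        L.nodeErrSum μ + R.nodeErrSum μ

/-- **Error accumulation over a gate tree.** The probability that the learned
evaluation errs at the root is at most the sum over all internal nodes of the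
per-node error of the hypothesis gate on uncorrupted inputs. -/
theorem impact_gate_tree_error_accumulation
    (n : ℕ) (μ : Measure (Fin n → Bool)) [IsProbabilityMeasure μ]
    (T : GateTree n) :
    μ {x | T.lval x ≠ T.val x} ≤ T.nodeErrSum μ := by
  induction T with
  | leaf i => simp [GateTree.val, GateTree.lval, GateTree.nodeErrSum]
  | node g h L R ihL ihR =>
    have hsub : {x | (GateTree.node g h L R).lval x ≠ (GateTree.node g h L R).val x} ⊆
        {x | h (L.val x) (R.val x) ≠ g (L.val x) (R.val x)} ∪
        ({x | L.lval x ≠ L.val x} ∪ {x | R.lval x ≠ R.val x}) := by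
      intro x hx
      by_cases hL : L.lval x = L.val x
      · by_cases hR : R.lval x = R.val x
        · left
          simpa [GateTree.lval, GateTree.val, hL, hR] using hx
        · right; right; exact hR
      · right; left; exact hL
    calc μ {x | (GateTree.node g h L R).lval x ≠ (GateTree.node g h L R).val x}
        ≤ μ ({x | h (L.val x) (R.val x) ≠ g (L.val x) (R.val x)} ∪
            ({x | L.lval x ≠ L.val x} ∪ {x | R.lval x ≠ R.val x})) := measure_mono hsub
      _ ≤ μ {x | h (L.val x) (R.val x) ≠ g (L.val x) (R.val x)} +
            μ ({x | L.lval x ≠ L.val x} ∪ {x | R.lval x ≠ R.val x}) := measure_union_le _ _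
      _ ≤ μ {x | h (L.val x) (R.val x) ≠ g (L.val x) (R.val x)} +
            (μ {x | L.lval x ≠ L.val x} + μ {x | R.lval x ≠ R.val x}) := by
            gcongr; exact measure_union_le _ _
      _ ≤ (GateTree.node g h L R).nodeErrSum μ := by
            simp only [GateTree.nodeErrSum]
            rw [add_assoc]
            gcongr
end

section
/- Corollary of error accumulation: with the notation of the gate-tree setting, if T is a gate tree with N internal nodes, ε_T > 0, and for every internal node v the per-node error satisfies μ({x : h_v(val(L_v, x), val(R_v, x)) ≠ g_v(val(L_v, x), val(R_v, x))}) ≤ ε_T / N, then the learned evaluation errs at the root with probability at most ε_T: μ({x : lval(T, x) ≠ val(T, x)}) ≤ ε_T. -/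
open MeasureTheory

/-- The number of internal nodes of a gate tree. -/
def GateTree.internalCount {n : ℕ} : GateTree n → ℕ
  | .leaf _ => 0
  | .node _ _ L R => L.internalCount + R.internalCount + 1

/-- Every internal node's hypothesis gate disagrees with its true gate (on the
uncorrupted values of its children) with probability at most `ε`. -/
def GateTree.PerNodeErrLE {n : ℕ} (μ : Measure (Fin n → Bool)) (ε : ENNReal) :
    GateTree n → Prop
  | .leaf _ => True
  | .node g h L R =>
      μ {x | h (L.val x) (R.val x) ≠ g (L.val x) (R.val x)} ≤ ε ∧
        L.PerNodeErrLE μ ε ∧ R.PerNodeErrLE μ ε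

lemma err_le_nodeErrSum {n : ℕ} (μ : Measure (Fin n → Bool))
    (T : GateTree n) : μ {x | T.lval x ≠ T.val x} ≤ T.nodeErrSum μ := by
  induction T with
  | leaf i => simp [GateTree.lval, GateTree.val, GateTree.nodeErrSum]
  | node g h L R ihL ihR =>
      have hsub : {x | (GateTree.node g h L R).lval x ≠ (GateTree.node g h L R).val x} ⊆
          ({x | h (L.val x) (R.val x) ≠ g (L.val x) (R.val x)} ∪
            {x | L.lval x ≠ L.val x}) ∪ {x | R.lval x ≠ R.val x} := by
        intro x hx
        simp only [GateTree.lval, GateTree.val, Set.mem_setOf_eq] at hx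
        by_cases hL : L.lval x = L.val x
        · by_cases hR : R.lval x = R.val x
          · left; left; simpa [hL, hR] using hx
          · right; exact hR
        · left; right; exact hL
      calc μ {x | (GateTree.node g h L R).lval x ≠ (GateTree.node g h L R).val x}
          ≤ μ (({x | h (L.val x) (R.val x) ≠ g (L.val x) (R.val x)} ∪
              {x | L.lval x ≠ L.val x}) ∪ {x | R.lval x ≠ R.val x}) := measure_mono hsub
        _ ≤ μ ({x | h (L.val x) (R.val x) ≠ g (L.val x) (R.val x)} ∪
              {x | L.lval x ≠ L.val x}) + μ {x | R.lval x ≠ R.val x} := measure_union_le _ _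
        _ ≤ (μ {x | h (L.val x) (R.val x) ≠ g (L.val x) (R.val x)} +
              μ {x | L.lval x ≠ L.val x}) + μ {x | R.lval x ≠ R.val x} :=
            add_le_add_left (measure_union_le _ _) _
        _ ≤ _ := by
            simp only [GateTree.nodeErrSum]
            gcongr

lemma nodeErrSum_le {n : ℕ} (μ : Measure (Fin n → Bool)) (ε : ENNReal)
    (T : GateTree n) (h : T.PerNodeErrLE μ ε) :
    T.nodeErrSum μ ≤ (T.internalCount : ENNReal) * ε := by
  induction T with
  | leaf i => simp [GateTree.nodeErrSum]
  | node g hh L R ihL ihR =>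
      obtain ⟨h1, h2, h3⟩ := h
      simp only [GateTree.nodeErrSum, GateTree.internalCount]
      push_cast
      calc _ ≤ ε + (L.internalCount : ENNReal) * ε + (R.internalCount : ENNReal) * ε :=
            add_le_add (add_le_add h1 (ihL h2)) (ihR h3)
        _ = ((L.internalCount : ENNReal) + R.internalCount + 1) * ε := by ring

/-- **Corollary of error accumulation.** If a gate tree has `N` internal nodes and
the per-node error at every internal node is at most `ε_T / N`, then the learned
evaluation errs at the root with probability at most `ε_T`. -/
theorem impact_gate_tree_error_corollary
    (n : ℕ) (μ : Measure (Fin n → Bool)) [IsProbabilityMeasure μ]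
    (T : GateTree n) (εT : ENNReal) (hε : 0 < εT)
    (hnode : T.PerNodeErrLE μ (εT / (T.internalCount : ENNReal))) :
    μ {x | T.lval x ≠ T.val x} ≤ εT := by
  set N := T.internalCount with hN
  rcases Nat.eq_zero_or_pos N with h0 | hpos
  · -- tree is a leaf
    cases T with
    | leaf i => simp [GateTree.lval, GateTree.val]
    | node g h L R => simp [GateTree.internalCount, hN] at h0
  · calc μ {x | T.lval x ≠ T.val x} ≤ T.nodeErrSum μ := err_le_nodeErrSum μ T
      _ ≤ (N : ENNReal) * (εT / N) := nodeErrSum_le μ _ T hnode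
      _ = εT := by
          rw [ENNReal.mul_div_cancel (by exact_mod_cast hpos.ne') (by simp)]
end
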